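/- For every flow network G=(V,E) and lifted graph G'=(V',E') as above, every feasible integral solution (x,y,y') of the lifted disjoint paths problem satisfies all path-induced cut inequalities: for every lifted edge vw ∈ E', every node u with uw ∈ R and u ≠ w, and every vu-path P in G, y'_{vw} ≤ Σ_{i ∈ P_V} Σ_{k ∉ P_V: ik∈E, kw∈R} y_{ik}. -/

import Mathlib

open Finset
open scoped Classical

section LiftedDisjointPaths

variable {V : Type*} [Fintype V] [DecidableEq V]

/-- A `vw`-path in the digraph with edge set `E`, given by its (nonempty) list of vertices:
it starts at `v`, ends at `w`, and consecutive vertices are joined by edges of `E`. -/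
def IsPath (E : Finset (V × V)) (v w : V) (p : List V) : Prop :=
  p ≠ [] ∧ p.head? = some v ∧ p.getLast? = some w ∧ p.Chain' (fun a b => (a, b) ∈ E)

/-- The edge list `P_E` of a path given by its vertex list. -/
def pEdges (p : List V) : List (V × V) := p.zip p.tail

/-- The reachability relation `R`: `vw ∈ R` iff `v = w` or there is a `vw`-path in `G`. -/
def Reach (E : Finset (V × V)) (v w : V) : Prop :=
  v = w ∨ ∃ p, IsPath E v w p

/-- `G = (V,E)` is a flow network with source `s` and sink `t`: it is acyclic, every node is
reachable from `s`, and `t` is reachable from every node. -/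
structure IsFlowNetwork (E : Finset (V × V)) (s t : V) : Prop where
  acyclic : ∀ v w : V, (v, w) ∈ E → ¬ Reach E w v
  reach_from_source : ∀ v : V, Reach E s v
  reach_to_sink : ∀ v : V, Reach E v t

/-- The lifted graph `G' = (V', E')` has node set `V' = V ∖ {s,t}`. -/
def IsLiftedGraph (E' : Finset (V × V)) (s t : V) : Prop :=
  ∀ e ∈ E', e.1 ≠ s ∧ e.1 ≠ t ∧ e.2 ≠ s ∧ e.2 ≠ t

/-- `y ∈ [0,1]^E`. -/
def InUnitBox (E : Finset (V × V)) (y : V × V → ℝ) : Prop :=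
  ∀ e ∈ E, 0 ≤ y e ∧ y e ≤ 1

/-! ### Paths in the multigraph `G ∪ G'` -/

/-- Vertex list `P_V` of a path in `G ∪ G'` starting at `v`; each step of `q` records the next
vertex together with a flag saying whether the edge used is a lifted edge. -/
def mVerts (v : V) (q : List (V × Bool)) : List V := v :: q.map Prod.fst

/-- The labelled edge list of a path in `G ∪ G'`. -/
def mEdges (v : V) (q : List (V × Bool)) : List ((V × V) × Bool) :=
  List.zipWith (fun a ub => ((a, ub.1), ub.2)) (mVerts v q) q

/-- `P_E`: the set of base edges of a path in `G ∪ G'`. -/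
def mBase (v : V) (q : List (V × Bool)) : Finset (V × V) :=
  ((mEdges v q).filterMap fun eb => if eb.2 then none else some eb.1).toFinset

/-- `P_{E'}`: the set of lifted edges of a path in `G ∪ G'`. -/
def mLifted (v : V) (q : List (V × Bool)) : Finset (V × V) :=
  ((mEdges v q).filterMap fun eb => if eb.2 then some eb.1 else none).toFinset

/-- A `vw`-path in the multigraph `G ∪ G'`: it starts at `v`, ends at `w`, each base step uses
an edge of `E`, each lifted step uses an edge of `E'`, and the sets of base and lifted edges
used are disjoint. -/
def IsMPath (E E' : Finset (V × V)) (v w : V) (q : List (V × Bool)) : Prop :=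
  (mVerts v q).getLast? = some w ∧
  (∀ eb ∈ mEdges v q, if eb.2 then eb.1 ∈ E' else eb.1 ∈ E) ∧
  Disjoint (mBase v q) (mLifted v q)

/-! ### The families of linear inequalities -/

/-- All path inequalities: for every lifted edge `vw ∈ E'` and every `vw`-path `P` in `G`,
`y'_{vw} ≥ Σ_{j ∈ P_V : vj ∈ E} y_{vj} − Σ_{i ∈ P_V∖{v,w}} Σ_{k ∉ P_V : ik ∈ E} y_{ik}`. -/
def PathIneqs (E E' : Finset (V × V)) (y y' : V × V → ℝ) : Prop :=
  ∀ v w : V, (v, w) ∈ E' → ∀ p : List V, IsPath E v w p →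
    (∑ j ∈ p.toFinset.filter (fun j => (v, j) ∈ E), y (v, j))
      - (∑ i ∈ p.toFinset \ {v, w},
          ∑ k ∈ (univ \ p.toFinset).filter (fun k => (i, k) ∈ E), y (i, k))
    ≤ y' (v, w)

/-- All lifted multicut path inequalities: for every lifted edge `vw ∈ E'` and every
`vw`-path `P` in `G`, `y'_{vw} ≥ Σ_{ij ∈ P_E} (y_{ij} − 1) + 1`. -/
def MulticutPathIneqs (E E' : Finset (V × V)) (y y' : V × V → ℝ) : Prop :=
  ∀ v w : V, (v, w) ∈ E' → ∀ p : List V, IsPath E v w p →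
    (∑ e ∈ (pEdges p).toFinset, (y e - 1)) + 1 ≤ y' (v, w)

/-- All lifted path inequalities: for every lifted edge `vw ∈ E'` and every `vw`-path `P` in
`G ∪ G'`, `y'_{vw} ≥ Σ_{j ∈ P_V : vj∈E} y_{vj} − Σ_{i ∈ P_V∖{v,w}} Σ_{k ∉ P_V : ik∈E} y_{ik}
+ Σ_{ij ∈ P_{E'}} y'_{ij} − Σ_{ij ∈ P_{E'} : ij∈E} y_{ij}`. -/
def LiftedPathIneqs (E E' : Finset (V × V)) (y y' : V × V → ℝ) : Prop :=
  ∀ v w : V, (v, w) ∈ E' → ∀ q : List (V × Bool), IsMPath E E' v w q →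
    (∑ j ∈ (mVerts v q).toFinset.filter (fun j => (v, j) ∈ E), y (v, j))
      - (∑ i ∈ (mVerts v q).toFinset \ {v, w},
          ∑ k ∈ (univ \ (mVerts v q).toFinset).filter (fun k => (i, k) ∈ E), y (i, k))
      + (∑ e ∈ mLifted v q, y' e)
      - (∑ e ∈ (mLifted v q).filter (fun e => e ∈ E), y e)
    ≤ y' (v, w)

/-- All path-induced cut inequalities: for every lifted edge `vw ∈ E'`, every node `u` with
`uw ∈ R` and `u ≠ w`, and every `vu`-path `P` in `G`,
`y'_{vw} ≤ Σ_{i ∈ P_V} Σ_{k ∉ P_V : ik∈E, kw∈R} y_{ik}`. -/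
def PathCutIneqs (E E' : Finset (V × V)) (y y' : V × V → ℝ) : Prop :=
  ∀ v w : V, (v, w) ∈ E' → ∀ u : V, Reach E u w → u ≠ w → ∀ p : List V, IsPath E v u p →
    y' (v, w) ≤
      ∑ i ∈ p.toFinset,
        ∑ k ∈ (univ \ p.toFinset).filter (fun k => (i, k) ∈ E ∧ Reach E k w), y (i, k)

/-- All lifted path-induced cut inequalities: for every lifted edge `vw ∈ E'`, every node `u`
with `uw ∈ R` and `u ≠ w`, and every `vu`-path `P` in `G ∪ G'`,
`y'_{vw} ≤ Σ_{i ∈ P_V} Σ_{k ∉ P_V : ik∈E, kw∈R} y_{ik} − Σ_{ij ∈ P_{E'}} y'_{ij}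
+ Σ_{ij ∈ P_{E'} : ij∈E} y_{ij}`. -/
def LiftedPathCutIneqs (E E' : Finset (V × V)) (y y' : V × V → ℝ) : Prop :=
  ∀ v w : V, (v, w) ∈ E' → ∀ u : V, Reach E u w → u ≠ w →
    ∀ q : List (V × Bool), IsMPath E E' v u q →
    y' (v, w) ≤
      (∑ i ∈ (mVerts v q).toFinset,
        ∑ k ∈ (univ \ (mVerts v q).toFinset).filter (fun k => (i, k) ∈ E ∧ Reach E k w),
          y (i, k))
      - (∑ e ∈ mLifted v q, y' e)
      + (∑ e ∈ (mLifted v q).filter (fun e => e ∈ E), y e)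

/-- All strengthened lifted path-induced cut inequalities: for every lifted edge `vw ∈ E'`
and every `vu`-path `P` in `G ∪ G'` with `uw ∈ E'`,
`y'_{vw} ≤ Σ_{i ∈ P_V∖{u}} Σ_{k ∉ P_V : ik∈E, kw∈R} y_{ik} − Σ_{ij ∈ P_{E'}} y'_{ij}
+ Σ_{ij ∈ P_{E'} : ij∈E} y_{ij} + y'_{uw}`. -/
def StrongLiftedPathCutIneqs (E E' : Finset (V × V)) (y y' : V × V → ℝ) : Prop :=
  ∀ v w : V, (v, w) ∈ E' → ∀ u : V, (u, w) ∈ E' →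
    ∀ q : List (V × Bool), IsMPath E E' v u q →
    y' (v, w) ≤
      (∑ i ∈ (mVerts v q).toFinset \ {u},
        ∑ k ∈ (univ \ (mVerts v q).toFinset).filter (fun k => (i, k) ∈ E ∧ Reach E k w),
          y (i, k))
      - (∑ e ∈ mLifted v q, y' e)
      + (∑ e ∈ (mLifted v q).filter (fun e => e ∈ E), y e)
      + y' (u, w)

/-- All symmetric path-induced cut inequalities: for every lifted edge `vw ∈ E'`, every node
`u` with `vu ∈ R` and `u ≠ v`, and every `uw`-path `P` in `G`,
`y'_{vw} ≤ Σ_{i ∈ P_V} Σ_{k ∉ P_V : ki∈E, vk∈R} y_{ki}`. -/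
def SymPathCutIneqs (E E' : Finset (V × V)) (y y' : V × V → ℝ) : Prop :=
  ∀ v w : V, (v, w) ∈ E' → ∀ u : V, Reach E v u → u ≠ v → ∀ p : List V, IsPath E u w p →
    y' (v, w) ≤
      ∑ i ∈ p.toFinset,
        ∑ k ∈ (univ \ p.toFinset).filter (fun k => (k, i) ∈ E ∧ Reach E v k), y (k, i)

/-- All symmetric lifted path-induced cut inequalities: for every lifted edge `vw ∈ E'`,
every node `u` with `vu ∈ R` and `u ≠ v`, and every `uw`-path `P` in `G ∪ G'`,
`y'_{vw} ≤ Σ_{i ∈ P_V} Σ_{k ∉ P_V : ki∈E, vk∈R} y_{ki} − Σ_{ij ∈ P_{E'}} y'_{ij}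
+ Σ_{ij ∈ P_{E'} : ij∈E} y_{ij}`. -/
def SymLiftedPathCutIneqs (E E' : Finset (V × V)) (y y' : V × V → ℝ) : Prop :=
  ∀ v w : V, (v, w) ∈ E' → ∀ u : V, Reach E v u → u ≠ v →
    ∀ q : List (V × Bool), IsMPath E E' u w q →
    y' (v, w) ≤
      (∑ i ∈ (mVerts u q).toFinset,
        ∑ k ∈ (univ \ (mVerts u q).toFinset).filter (fun k => (k, i) ∈ E ∧ Reach E v k),
          y (k, i))
      - (∑ e ∈ mLifted u q, y' e)
      + (∑ e ∈ (mLifted u q).filter (fun e => e ∈ E), y e)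

/-- All strengthened symmetric lifted path-induced cut inequalities: for every lifted edge
`vw ∈ E'` and every `uw`-path `P` in `G ∪ G'` with `vu ∈ E'`,
`y'_{vw} ≤ Σ_{i ∈ P_V∖{u}} Σ_{k ∉ P_V : ki∈E, vk∈R} y_{ki} − Σ_{ij ∈ P_{E'}} y'_{ij}
+ Σ_{ij ∈ P_{E'} : ij∈E} y_{ij} + y'_{vu}`. -/
def StrongSymLiftedPathCutIneqs (E E' : Finset (V × V)) (y y' : V × V → ℝ) : Prop :=
  ∀ v w : V, (v, w) ∈ E' → ∀ u : V, (v, u) ∈ E' →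
    ∀ q : List (V × Bool), IsMPath E E' u w q →
    y' (v, w) ≤
      (∑ i ∈ (mVerts u q).toFinset \ {u},
        ∑ k ∈ (univ \ (mVerts u q).toFinset).filter (fun k => (k, i) ∈ E ∧ Reach E v k),
          y (k, i))
      - (∑ e ∈ mLifted u q, y' e)
      + (∑ e ∈ (mLifted u q).filter (fun e => e ∈ E), y e)
      + y' (v, u)

/-- The two single node cut inequalities for every lifted edge `vw ∈ E'`:
`y'_{vw} ≤ Σ_{u : vu∈E, uw∈R} y_{vu}` and `y'_{vw} ≤ Σ_{u : uw∈E, vu∈R} y_{uw}`. -/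
def SingleNodeCutIneqs (E E' : Finset (V × V)) (y y' : V × V → ℝ) : Prop :=
  ∀ v w : V, (v, w) ∈ E' →
    (y' (v, w) ≤ ∑ u ∈ univ.filter (fun u => (v, u) ∈ E ∧ Reach E u w), y (v, u)) ∧
    (y' (v, w) ≤ ∑ u ∈ univ.filter (fun u => (u, w) ∈ E ∧ Reach E v u), y (u, w))

/-- A feasible integral solution `(x,y,y')` of the lifted disjoint paths problem:
`x,y,y'` are binary, flow conservation holds at every node other than `s` and `t`, and a
lifted edge is active iff there is an active path in `G` between its endpoints. -/
def FeasibleIntegral (E E' : Finset (V × V)) (s t : V)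
    (x : V → ℝ) (y y' : V × V → ℝ) : Prop :=
  (∀ v : V, x v = 0 ∨ x v = 1) ∧
  (∀ e ∈ E, y e = 0 ∨ y e = 1) ∧
  (∀ e ∈ E', y' e = 0 ∨ y' e = 1) ∧
  (∀ v : V, v ≠ s → v ≠ t →
    (∑ u ∈ univ.filter (fun u => (u, v) ∈ E), y (u, v)) = x v ∧
    (∑ w ∈ univ.filter (fun w => (v, w) ∈ E), y (v, w)) = x v) ∧
  (∀ v w : V, (v, w) ∈ E' →
    (y' (v, w) = 1 ↔ ∃ p : List V, IsPath E v w p ∧ ∀ e ∈ pEdges p, y e = 1))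

end LiftedDisjointPaths

section Aux

variable {V : Type*} [Fintype V] [DecidableEq V]

lemma isPath_cons' {E : Finset (V × V)} {a b c : V} {p : List V}
    (h : IsPath E b c p) (hab : (a, b) ∈ E) : IsPath E a c (a :: p) := by
  obtain ⟨hne, hhd, hlast, hch⟩ := h
  refine ⟨by simp, rfl, ?_, ?_⟩
  · cases p with
    | nil => exact absurd rfl hne
    | cons x xs => simpa [List.getLast?_cons_cons] using hlast
  · cases p with
    | nil => exact absurd rfl hne
    | cons x xs =>
      have hx : x = b := by simpa using hhd
      subst hx
      exact List.isChain_cons_cons.mpr ⟨hab, hch⟩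

lemma rtg_of_isPath {E : Finset (V × V)} {b : V} :
    ∀ {p : List V} {a : V}, IsPath E a b p →
      Relation.ReflTransGen (fun x y => (x, y) ∈ E) a b := by
  intro p
  induction p with
  | nil => intro a h; exact absurd rfl h.1
  | cons x rest ih =>
    intro a h
    obtain ⟨_, hhd, hlast, hch⟩ := h
    have hx : x = a := by simpa using hhd
    subst hx
    cases rest with
    | nil =>
      have hub : x = b := by simpa using hlast
      exact hub ▸ Relation.ReflTransGen.refl
    | cons y rs =>
      have hp : IsPath E y b (y :: rs) :=
        ⟨by simp, rfl, by simpa [List.getLast?_cons_cons] using hlast, hch.tail⟩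
      exact Relation.ReflTransGen.head (List.isChain_cons_cons.mp hch).1 (ih hp)

lemma reach_iff_rtg {E : Finset (V × V)} {a b : V} :
    Reach E a b ↔ Relation.ReflTransGen (fun x y => (x, y) ∈ E) a b := by
  constructor
  · rintro (rfl | ⟨p, hp⟩)
    · exact Relation.ReflTransGen.refl
    · exact rtg_of_isPath hp
  · intro h
    induction h using Relation.ReflTransGen.head_induction_on with
    | refl => exact Or.inl rfl
    | head hedge _ ih =>
      rcases ih with rfl | ⟨p, hp⟩
      · exact Or.inr ⟨_, isPath_cons'
          ⟨List.cons_ne_nil _ _, rfl, by simp, List.isChain_singleton _⟩ hedge⟩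
      · exact Or.inr ⟨_ :: p, isPath_cons' hp hedge⟩

lemma reach_of_mem_isPath {E : Finset (V × V)} {b c : V} :
    ∀ {p : List V} {a : V}, IsPath E a b p → c ∈ p → Reach E c b := by
  intro p
  induction p with
  | nil => intro a h hc; simp at hc
  | cons x rest ih =>
    intro a h hc
    obtain ⟨_, hhd, hlast, hch⟩ := h
    have hx : x = a := by simpa using hhd
    subst hx
    rcases List.mem_cons.mp hc with rfl | hc'
    · exact Or.inr ⟨c :: rest, ⟨by simp, rfl, hlast, hch⟩⟩
    · cases rest with
      | nil => simp at hc'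
      | cons y rs =>
        exact ih ⟨by simp, rfl, by simpa [List.getLast?_cons_cons] using hlast, hch.tail⟩ hc'

lemma exists_crossing {E : Finset (V × V)} {w : V} (S : Finset V) :
    ∀ {q : List V} {v : V}, IsPath E v w q → v ∈ S → w ∉ S →
      ∃ a b, (a, b) ∈ pEdges q ∧ a ∈ S ∧ b ∉ S ∧ (a, b) ∈ E ∧ Reach E b w := by
  intro q
  induction q with
  | nil => intro v h; exact absurd rfl h.1
  | cons x rest ih =>
    intro v h hv hw
    obtain ⟨_, hhd, hlast, hch⟩ := h
    have hx : x = v := by simpa using hhd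
    subst hx
    cases rest with
    | nil =>
      have : x = w := by simpa using hlast
      exact absurd (this ▸ hv) hw
    | cons y rs =>
      have hp : IsPath E y w (y :: rs) :=
        ⟨by simp, rfl, by simpa [List.getLast?_cons_cons] using hlast, hch.tail⟩
      have hxy : (x, y) ∈ E := (List.isChain_cons_cons.mp hch).1
      have hpe : pEdges (x :: y :: rs) = (x, y) :: pEdges (y :: rs) := by
        simp [pEdges]
      by_cases hyS : y ∈ S
      · obtain ⟨a, b, hm, h1, h2, h3, h4⟩ := ih hp hyS hw
        exact ⟨a, b, by rw [hpe]; exact List.mem_cons_of_mem _ hm, h1, h2, h3, h4⟩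
      · exact ⟨x, y, by rw [hpe]; exact List.mem_cons_self, hv, hyS, hxy,
          reach_of_mem_isPath hp (by simp)⟩

end Aux

/-- Every feasible integral solution of the lifted disjoint paths problem
satisfies all path-induced cut inequalities. -/
theorem feasible_integral_satisfies_path_cut_ineqs
    {V : Type*} [Fintype V] [DecidableEq V] (E E' : Finset (V × V)) (s t : V)
    (hG : IsFlowNetwork E s t) (hG' : IsLiftedGraph E' s t)
    (x : V → ℝ) (y y' : V × V → ℝ)
    (h : FeasibleIntegral E E' s t x y y') :
    PathCutIneqs E E' y y' := by
  obtain ⟨hx, hy, hy', hflow, hiff⟩ := h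
  intro v w hvw u huw hune p hp
  have hnonneg : ∀ i ∈ p.toFinset, 0 ≤
      ∑ k ∈ (univ \ p.toFinset).filter (fun k => (i, k) ∈ E ∧ Reach E k w), y (i, k) := by
    intro i _
    apply Finset.sum_nonneg
    intro k hk
    simp only [Finset.mem_filter] at hk
    rcases hy (i, k) hk.2.1 with h0 | h1 <;> linarith
  rcases hy' (v, w) hvw with h0 | h1
  · rw [h0]; exact Finset.sum_nonneg hnonneg
  · rw [h1]
    obtain ⟨q, hq, hqy⟩ := (hiff v w hvw).mp h1
    have hwp : w ∉ p.toFinset := by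
      intro hwmem
      have hwu : Relation.ReflTransGen (fun a b => (a, b) ∈ E) w u :=
        reach_iff_rtg.mp (reach_of_mem_isPath hp (List.mem_toFinset.mp hwmem))
      rcases (Relation.ReflTransGen.cases_head hwu) with rfl | ⟨z, hwz, hzu⟩
      · exact hune rfl
      · exact hG.acyclic w z hwz (reach_iff_rtg.mpr
          (hzu.trans (reach_iff_rtg.mp huw)))
    have hvp : v ∈ p.toFinset := by
      obtain ⟨hne, hhd, _, _⟩ := hq
      obtain ⟨hne', hhd', _, _⟩ := hp
      cases hpp : p with
      | nil => exact absurd hpp hne'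
      | cons a l =>
        rw [hpp] at hhd'
        have : a = v := by simpa using hhd'
        simp [hpp, this]
    obtain ⟨a, b, hm, haS, hbS, habE, hbw⟩ := exists_crossing p.toFinset hq hvp hwp
    have h1ab : y (a, b) = 1 := hqy _ hm
    have hbmem : b ∈ (univ \ p.toFinset).filter (fun k => (a, k) ∈ E ∧ Reach E k w) := by
      simp [Finset.mem_filter, Finset.mem_sdiff, hbS, habE, hbw]
    calc (1 : ℝ) = y (a, b) := h1ab.symm
      _ ≤ ∑ k ∈ (univ \ p.toFinset).filter (fun k => (a, k) ∈ E ∧ Reach E k w), y (a, k) := by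
          apply Finset.single_le_sum (fun k hk => ?_) hbmem
          simp only [Finset.mem_filter] at hk
          rcases hy (a, k) hk.2.1 with h0 | h1 <;> linarith
      _ ≤ _ := Finset.single_le_sum hnonneg haS
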